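/- Let f : ℝ^{m×n} → ℝ be continuously differentiable, and let G : ℝ^{m×n} → ℝ^{m×n} denote its Frobenius gradient, i.e., the Fréchet derivative of f at Y applied to a direction X equals ⟨G(Y), X⟩_F for all X. Let Û ∈ ℝ^{m×k}, V̂ ∈ ℝ^{n×k} have orthonormal columns, and let Ŝ : ℝ → ℝ^{k×k} be differentiable on [t0, t1] with Ŝ'(t) = −Ûᵀ G(Ŷ(t)) V̂ where Ŷ(t) = Û Ŝ(t) V̂ᵀ. Then for all t ∈ [t0, t1], d/dt f(Ŷ(t)) = −‖Ûᵀ G(Ŷ(t)) V̂‖_F², and consequently f(Ŷ(t1)) ≤ f(Ŷ(t0)) − (t1 − t0) · α², where α = min_{t ∈ [t0, t1]} ‖Ûᵀ G(Ŷ(t)) V̂‖_F. -/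

import Mathlib

open Matrix

attribute [local instance] Matrix.frobeniusSeminormedAddCommGroup
  Matrix.frobeniusNormedAddCommGroup Matrix.frobeniusNormedSpace

/-- The Frobenius inner product `⟨A, B⟩_F = trace(Aᵀ B)`. -/
noncomputable def frobInner {m n : ℕ} (A B : Matrix (Fin m) (Fin n) ℝ) : ℝ :=
  (Aᵀ * B).trace

/-- The Frobenius norm `‖A‖_F = ⟨A, A⟩_F^{1/2}`. -/
noncomputable def frobNorm {m n : ℕ} (A : Matrix (Fin m) (Fin n) ℝ) : ℝ :=
  Real.sqrt (frobInner A A)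


theorem my_hasDerivAt_matrix {k l : ℕ} {S : ℝ → Matrix (Fin k) (Fin l) ℝ}
    {S' : Matrix (Fin k) (Fin l) ℝ} {t : ℝ}
    (h : ∀ i j, HasDerivAt (fun s => S s i j) (S' i j) t) : HasDerivAt S S' t := by
  have hpi : HasDerivAt (fun s : ℝ => (fun i j => S s i j : Fin k → Fin l → ℝ))
      (fun i j => S' i j) t := by
    rw [hasDerivAt_pi]; intro i; rw [hasDerivAt_pi]; exact h i
  let e : (Fin k → Fin l → ℝ) ≃ₗ[ℝ] Matrix (Fin k) (Fin l) ℝ := LinearEquiv.refl ℝ _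
  exact e.toContinuousLinearEquiv.toContinuousLinearMap.hasFDerivAt.comp_hasDerivAt t hpi

theorem frobInner_self_nonneg {m n : ℕ} (A : Matrix (Fin m) (Fin n) ℝ) :
    0 ≤ frobInner A A := by
  unfold frobInner
  rw [Matrix.trace]
  refine Finset.sum_nonneg fun j _ => ?_
  simp only [Matrix.diag, Matrix.mul_apply, Matrix.transpose_apply]
  exact Finset.sum_nonneg fun i _ => mul_self_nonneg _

theorem frobNorm_sq {m n : ℕ} (A : Matrix (Fin m) (Fin n) ℝ) :
    frobNorm A ^ 2 = frobInner A A := Real.sq_sqrt (frobInner_self_nonneg A)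

/-- Key estimate in the proof of Theorem 5: along the Galerkin S-step of the gradient system,
`d/dt f(Ŷ(t)) = -‖Ûᵀ G(Ŷ(t)) V̂‖_F²`, and hence
`f(Ŷ(t₁)) ≤ f(Ŷ(t₀)) - (t₁ - t₀)·α²` with `α = min_{t ∈ [t₀,t₁]} ‖Ûᵀ G(Ŷ(t)) V̂‖_F`. -/
theorem sStep_gradient_decrease
    {m n k : ℕ} {t0 t1 : ℝ}
    (f : Matrix (Fin m) (Fin n) ℝ → ℝ)
    (G : Matrix (Fin m) (Fin n) ℝ → Matrix (Fin m) (Fin n) ℝ)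
    (hf : Differentiable ℝ f)
    (hG : Continuous G)
    (hgrad : ∀ Y X, fderiv ℝ f Y X = frobInner (G Y) X)
    (Uhat : Matrix (Fin m) (Fin k) ℝ) (Vhat : Matrix (Fin n) (Fin k) ℝ)
    (hU : Uhatᵀ * Uhat = 1) (hV : Vhatᵀ * Vhat = 1)
    (Shat : ℝ → Matrix (Fin k) (Fin k) ℝ)
    (Yhat : ℝ → Matrix (Fin m) (Fin n) ℝ)
    (hYhat : ∀ t, Yhat t = Uhat * Shat t * Vhatᵀ)
    (ht : t0 ≤ t1)
    (hS : ∀ t ∈ Set.Icc t0 t1, ∀ i j,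
      HasDerivAt (fun s => Shat s i j) ((-(Uhatᵀ * G (Yhat t) * Vhat)) i j) t)
    (α : ℝ)
    (hα : α = ⨅ t : Set.Icc t0 t1, frobNorm (Uhatᵀ * G (Yhat ↑t) * Vhat)) :
    (∀ t ∈ Set.Icc t0 t1,
      HasDerivAt (fun s => f (Yhat s)) (-(frobNorm (Uhatᵀ * G (Yhat t) * Vhat)) ^ 2) t)
    ∧ f (Yhat t1) ≤ f (Yhat t0) - (t1 - t0) * α ^ 2 := by
  -- the linear map S ↦ Û S V̂ᵀ
  let L : Matrix (Fin k) (Fin k) ℝ →ₗ[ℝ] Matrix (Fin m) (Fin n) ℝ :=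
    { toFun := fun S => Uhat * S * Vhatᵀ
      map_add' := fun A B => by simp [Matrix.mul_add, Matrix.add_mul]
      map_smul' := fun c A => by simp [Matrix.mul_smul, Matrix.smul_mul] }
  have key : ∀ t ∈ Set.Icc t0 t1,
      HasDerivAt (fun s => f (Yhat s)) (-(frobNorm (Uhatᵀ * G (Yhat t) * Vhat)) ^ 2) t := by
    intro t ht'
    set W := Uhatᵀ * G (Yhat t) * Vhat with hW
    have hSder : HasDerivAt Shat (-W) t := my_hasDerivAt_matrix (hS t ht')
    have hYder : HasDerivAt Yhat (Uhat * (-W) * Vhatᵀ) t := by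
      have := L.toContinuousLinearMap.hasFDerivAt.comp_hasDerivAt t hSder
      have hfun : Yhat = fun s => L (Shat s) := funext fun s => hYhat s
      rw [hfun]
      exact this
    have hcomp := (hf (Yhat t)).hasFDerivAt.comp_hasDerivAt t hYder
    have hval : fderiv ℝ f (Yhat t) (Uhat * (-W) * Vhatᵀ)
        = -(frobNorm W) ^ 2 := by
      rw [hgrad, frobNorm_sq]
      unfold frobInner
      rw [show Uhat * (-W) * Vhatᵀ = -(Uhat * W * Vhatᵀ) by
        simp [Matrix.mul_neg, Matrix.neg_mul]]
      rw [Matrix.mul_neg, Matrix.trace_neg, neg_inj]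
      rw [show (G (Yhat t))ᵀ * (Uhat * W * Vhatᵀ)
            = ((G (Yhat t))ᵀ * Uhat * W) * Vhatᵀ from by simp [Matrix.mul_assoc],
        Matrix.trace_mul_comm]
      congr 1
      rw [hW]
      simp [Matrix.transpose_mul, Matrix.mul_assoc]
    replace hcomp := hcomp.congr_deriv hval
    exact hcomp
  refine ⟨key, ?_⟩
  -- bounds on α
  have hne : Nonempty (Set.Icc t0 t1) := Set.nonempty_Icc.mpr ht |>.to_subtype
  have hαnn : 0 ≤ α := by
    rw [hα]; exact Real.iInf_nonneg fun t => Real.sqrt_nonneg _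
  have hαle : ∀ t ∈ Set.Icc t0 t1, α ≤ frobNorm (Uhatᵀ * G (Yhat t) * Vhat) := by
    intro t ht'
    rw [hα]
    exact ciInf_le ⟨0, fun x ⟨i, hi⟩ => hi ▸ Real.sqrt_nonneg _⟩ (⟨t, ht'⟩ : Set.Icc t0 t1)
  -- mean value estimate
  have hcont : ContinuousOn (fun s => f (Yhat s)) (Set.Icc t0 t1) :=
    fun t ht' => ((key t ht').continuousAt).continuousWithinAt
  have hdiff : DifferentiableOn ℝ (fun s => f (Yhat s)) (interior (Set.Icc t0 t1)) := by
    intro t ht'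
    rw [interior_Icc] at ht'
    exact ((key t (Set.Ioo_subset_Icc_self ht')).differentiableAt).differentiableWithinAt
  have hder_le : ∀ t ∈ interior (Set.Icc t0 t1), deriv (fun s => f (Yhat s)) t ≤ -α ^ 2 := by
    intro t ht'
    rw [interior_Icc] at ht'
    have ht'' := Set.Ioo_subset_Icc_self ht'
    rw [(key t ht'').deriv]
    have := pow_le_pow_left₀ hαnn (hαle t ht'') 2
    linarith
  have := (convex_Icc t0 t1).image_sub_le_mul_sub_of_deriv_le hcont hdiff hder_le
    t0 (Set.left_mem_Icc.mpr ht) t1 (Set.right_mem_Icc.mpr ht) ht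
  linarith
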